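/- For v ≥ 4 and d ≥ 1, the number of diamond permutations of type (v,d) avoiding both 132 and 312 equals 2^{d-1}. -/

import Mathlib

/-!
Common definitions.  Positions and values are 0-indexed throughout:
a "diamond permutation of type (v,d)" is a permutation of `Fin (v*d)`
whose `i`-th block of `v` consecutive positions (positions `i*v, …, i*v+v-1`)
has its minimum value in the first position and its maximum value in the
last position of the block.
-/

def IsDiamond (v d : ℕ) (π : Equiv.Perm (Fin (v * d))) : Prop :=
  ∀ i, i < d → ∀ j, j < v →
    ∀ (h0 : i * v < v * d) (hj : i * v + j < v * d) (hl : i * v + (v - 1) < v * d),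
      π ⟨i * v, h0⟩ ≤ π ⟨i * v + j, hj⟩ ∧ π ⟨i * v + j, hj⟩ ≤ π ⟨i * v + (v - 1), hl⟩

def Avoids123 {n : ℕ} (π : Equiv.Perm (Fin n)) : Prop :=
  ¬ ∃ i j k : Fin n, i < j ∧ j < k ∧ π i < π j ∧ π j < π k

def Avoids132 {n : ℕ} (π : Equiv.Perm (Fin n)) : Prop :=
  ¬ ∃ i j k : Fin n, i < j ∧ j < k ∧ π i < π k ∧ π k < π j

def Avoids213 {n : ℕ} (π : Equiv.Perm (Fin n)) : Prop :=
  ¬ ∃ i j k : Fin n, i < j ∧ j < k ∧ π j < π i ∧ π i < π k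

def Avoids231 {n : ℕ} (π : Equiv.Perm (Fin n)) : Prop :=
  ¬ ∃ i j k : Fin n, i < j ∧ j < k ∧ π k < π i ∧ π i < π j

def Avoids312 {n : ℕ} (π : Equiv.Perm (Fin n)) : Prop :=
  ¬ ∃ i j k : Fin n, i < j ∧ j < k ∧ π j < π k ∧ π k < π i

def Avoids321 {n : ℕ} (π : Equiv.Perm (Fin n)) : Prop :=
  ¬ ∃ i j k : Fin n, i < j ∧ j < k ∧ π k < π j ∧ π j < π i

/-- `π` contains the pattern `ρ`: some subsequence of `π` is order-isomorphic to `ρ`. -/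
def ContainsPat {m n : ℕ} (ρ : Equiv.Perm (Fin m)) (π : Equiv.Perm (Fin n)) : Prop :=
  ∃ f : Fin m → Fin n, StrictMono f ∧ ∀ a b, π (f a) < π (f b) ↔ ρ a < ρ b

def AvoidsPat {m n : ℕ} (ρ : Equiv.Perm (Fin m)) (π : Equiv.Perm (Fin n)) : Prop :=
  ¬ ContainsPat ρ π

/-- The reverse-complement of a permutation: `(rcPerm π) i = n - 1 - π (n - 1 - i)`. -/
def rcPerm {n : ℕ} (π : Equiv.Perm (Fin n)) : Equiv.Perm (Fin n) :=
  (Fin.revPerm.trans π).trans Fin.revPerm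

/-- The number of descents of `π`. -/
noncomputable def desNum {n : ℕ} (π : Equiv.Perm (Fin n)) : ℕ :=
  Nat.card {i : Fin n // ∃ h : i.1 + 1 < n, π ⟨i.1 + 1, h⟩ < π i}

namespace AV
open Finset

variable {n : ℕ}

def Pmin (π : Equiv.Perm (Fin n)) (p : Fin n) : Prop := ∀ q, q < p → π p < π q
def Pmax (π : Equiv.Perm (Fin n)) (p : Fin n) : Prop := ∀ q, q < p → π q < π p

lemma minmax_of_avoids {π : Equiv.Perm (Fin n)} (h1 : Avoids132 π) (h2 : Avoids312 π)
    (p : Fin n) : Pmin π p ∨ Pmax π p := by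
  by_contra hc
  obtain ⟨hmin, hmax⟩ := not_or.mp hc
  rw [Pmin] at hmin; rw [Pmax] at hmax
  push_neg at hmin hmax
  obtain ⟨a, hap, ha⟩ := hmin
  obtain ⟨b, hbp, hb⟩ := hmax
  have ha' : π a < π p :=
    lt_of_le_of_ne (ha) (fun h => absurd (π.injective h) (ne_of_lt hap))
  have hb' : π p < π b :=
    lt_of_le_of_ne (hb) (fun h => absurd (π.injective h) (ne_of_gt hbp))
  have hab : a ≠ b := fun h => absurd (h ▸ ha') (asymm hb')
  rcases lt_or_gt_of_ne hab with h | h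
  · exact h1 ⟨a, b, p, h, hbp, ha', hb'⟩
  · exact h2 ⟨b, a, p, h, hap, ha', hb'⟩

lemma avoids_of_minmax {π : Equiv.Perm (Fin n)} (h : ∀ p, Pmin π p ∨ Pmax π p) :
    Avoids132 π ∧ Avoids312 π := by
  constructor
  · rintro ⟨i, j, k, hij, hjk, h1, h2⟩
    rcases h k with hk | hk
    · exact absurd h1 (asymm (hk i (hij.trans hjk)))
    · exact absurd h2 (asymm (hk j hjk))
  · rintro ⟨i, j, k, hij, hjk, h1, h2⟩
    rcases h k with hk | hk
    · exact absurd h1 (asymm (hk j hjk))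
    · exact absurd h2 (asymm (hk i (hij.trans hjk)))

def cnt (M : Finset (Fin n)) (p : Fin n) : ℕ := #(M.filter fun q => p < q)

lemma cnt_le (M : Finset (Fin n)) (p : Fin n) : cnt M p ≤ n - 1 - p.val := by
  rw [← Fin.card_Ioi]
  exact card_le_card (fun q hq => by simpa using (mem_filter.mp hq).2)

lemma cnt_succ_le {M : Finset (Fin n)} {p q : Fin n} (h : q < p) (hp : p ∈ M) :
    cnt M p + 1 ≤ cnt M q := by
  have hsub : insert p (M.filter fun r => p < r) ⊆ M.filter fun r => q < r := by
    intro r hr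
    rcases mem_insert.mp hr with rfl | hr
    · exact mem_filter.mpr ⟨hp, h⟩
    · obtain ⟨hr1, hr2⟩ := mem_filter.mp hr
      exact mem_filter.mpr ⟨hr1, h.trans hr2⟩
  have hnot : p ∉ (M.filter fun r => p < r) := fun hmem => absurd (mem_filter.mp hmem).2 (lt_irrefl p)
  calc cnt M p + 1 = #(insert p (M.filter fun r => p < r)) := (card_insert_of_notMem hnot).symm
    _ ≤ cnt M q := card_le_card hsub

lemma cnt_gap {M : Finset (Fin n)} {p q : Fin n} (h : q < p) (hp : p ∉ M) :
    cnt M q + q.val + 1 ≤ cnt M p + p.val := by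
  have hsub : (M.filter fun r => q < r) ⊆ (M.filter fun r => p < r) ∪ Ioo q p := by
    intro r hr
    obtain ⟨hr1, hr2⟩ := mem_filter.mp hr
    rcases lt_trichotomy r p with hrp | rfl | hpr
    · exact mem_union_right _ (mem_Ioo.mpr ⟨hr2, hrp⟩)
    · exact absurd hr1 hp
    · exact mem_union_left _ (mem_filter.mpr ⟨hr1, hpr⟩)
  have hcard := (card_le_card hsub).trans (card_union_le _ _)
  rw [Fin.card_Ioo] at hcard
  have hv : q.val < p.val := h
  have : cnt M q ≤ cnt M p + (p.val - q.val - 1) := hcard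
  omega

def Ffun (M : Finset (Fin n)) (p : Fin n) : ℕ :=
  if p ∈ M then cnt M p else p.val + cnt M p

lemma Ffun_lt (M : Finset (Fin n)) (p : Fin n) : Ffun M p < n := by
  have h1 := cnt_le M p
  have h2 := p.isLt
  unfold Ffun; split <;> omega

lemma Ffun_lt_of_mem {M : Finset (Fin n)} {p q : Fin n} (h : q < p) (hp : p ∈ M) :
    Ffun M p < Ffun M q := by
  have h1 := cnt_succ_le h hp
  simp only [Ffun, if_pos hp]
  split <;> omega

lemma Ffun_gt_of_not_mem {M : Finset (Fin n)} {p q : Fin n} (h : q < p) (hp : p ∉ M) :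
    Ffun M q < Ffun M p := by
  have h1 := cnt_gap h hp
  simp only [Ffun, if_neg hp]
  split <;> omega

lemma Ffun_injective (M : Finset (Fin n)) :
    Function.Injective (fun p => (⟨Ffun M p, Ffun_lt M p⟩ : Fin n)) := by
  intro p q hpq
  have h : Ffun M p = Ffun M q := congrArg Fin.val hpq
  by_contra hne
  rcases lt_or_gt_of_ne hne with hlt | hlt
  · by_cases hq : q ∈ M
    · exact absurd h (ne_of_gt (Ffun_lt_of_mem hlt hq))
    · exact absurd h (ne_of_lt (Ffun_gt_of_not_mem hlt hq))
  · by_cases hq : p ∈ M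
    · exact absurd h (ne_of_lt (Ffun_lt_of_mem hlt hq))
    · exact absurd h (ne_of_gt (Ffun_gt_of_not_mem hlt hq))

noncomputable def Fperm (M : Finset (Fin n)) : Equiv.Perm (Fin n) :=
  Equiv.ofBijective _ (Finite.injective_iff_bijective.mp (Ffun_injective M))

lemma Fperm_val (M : Finset (Fin n)) (p : Fin n) : (Fperm M p).val = Ffun M p := rfl

lemma Fperm_pmin {M : Finset (Fin n)} {p : Fin n} (hp : p ∈ M) : Pmin (Fperm M) p :=
  fun q hq => Fin.mk_lt_mk.mpr (Ffun_lt_of_mem hq hp)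

lemma Fperm_pmax {M : Finset (Fin n)} {p : Fin n} (hp : p ∉ M) : Pmax (Fperm M) p :=
  fun q hq => Fin.mk_lt_mk.mpr (Ffun_gt_of_not_mem hq hp)

lemma perm_val_eq (π : Equiv.Perm (Fin n)) (M : Finset (Fin n))
    (h0 : ∀ p ∈ M, Pmin π p) (h1 : ∀ p ∉ M, Pmax π p) (p : Fin n) :
    (π p).val = Ffun M p := by
  have key : (π p).val = #(univ.filter fun q => π q < π p) := by
    have heq : (univ.filter fun q => π q < π p) = (Iio (π p)).map π.symm.toEmbedding := by
      ext q
      simp only [mem_filter, mem_univ, true_and, mem_map, mem_Iio, Equiv.coe_toEmbedding]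
      constructor
      · intro h; exact ⟨π q, h, π.symm_apply_apply q⟩
      · rintro ⟨x, hx, rfl⟩; simpa using hx
    rw [heq, card_map, Fin.card_Iio]
  rw [key, Ffun]
  by_cases hp : p ∈ M
  · rw [if_pos hp]
    unfold cnt
    congr 1
    ext q
    simp only [mem_filter, mem_univ, true_and]
    constructor
    · intro hq
      have hne : q ≠ p := fun h => absurd (h ▸ hq) (lt_irrefl _)
      rcases lt_or_gt_of_ne hne with hlt | hlt
      · exact absurd (h0 p hp q hlt) (asymm hq)
      · by_cases hqM : q ∈ M
        · exact ⟨hqM, hlt⟩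
        · exact absurd (h1 q hqM p hlt) (asymm hq)
    · rintro ⟨hqM, hq⟩
      exact h0 q hqM p hq
  · rw [if_neg hp]
    have heq : (univ.filter fun q => π q < π p) = Iio p ∪ M.filter fun q => p < q := by
      ext q
      simp only [mem_filter, mem_univ, true_and, mem_union, mem_Iio]
      constructor
      · intro hq
        have hne : q ≠ p := fun h => absurd (h ▸ hq) (lt_irrefl _)
        rcases lt_or_gt_of_ne hne with hlt | hlt
        · exact Or.inl hlt
        · by_cases hqM : q ∈ M
          · exact Or.inr ⟨hqM, hlt⟩
          · exact absurd (h1 q hqM p hlt) (asymm hq)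
      · rintro (hlt | ⟨hqM, hlt⟩)
        · exact h1 p hp q hlt
        · exact h0 q hqM p hlt
    have hdisj : Disjoint (Iio p) (M.filter fun q => p < q) :=
      disjoint_left.mpr fun q hq1 hq2 =>
        absurd ((mem_filter.mp hq2).2) (asymm (mem_Iio.mp hq1))
    rw [heq, card_union_of_disjoint hdisj, Fin.card_Iio]
    rfl

end AV

namespace AV
open Finset

def Mof (v d : ℕ) (ε : Fin (d-1) → Bool) : Finset (Fin (v*d)) :=
  univ.filter fun p => p.val = 0 ∨ ∃ i : Fin (d-1), ε i = true ∧ p.val = (i.val+1)*v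

lemma mem_Mof {v d : ℕ} {ε : Fin (d-1) → Bool} {p : Fin (v*d)} :
    p ∈ Mof v d ε ↔ p.val = 0 ∨ ∃ i : Fin (d-1), ε i = true ∧ p.val = (i.val+1)*v := by
  simp [Mof]

lemma iv_lt {v d : ℕ} (hv : 0 < v) (i : Fin (d-1)) : (i.val+1)*v < v*d := by
  have h1 : i.val + 1 ≤ d - 1 := i.isLt
  have h2 : (i.val+1)*v ≤ (d-1)*v := Nat.mul_le_mul_right v h1
  have h3 : (d-1)*v < d*v := (Nat.mul_lt_mul_right hv).mpr (by omega)
  have h4 : d*v = v*d := Nat.mul_comm d v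
  omega

lemma not_mem_Mof {v d : ℕ} {ε : Fin (d-1) → Bool} {i j : ℕ}
    (hj0 : 0 < j) (hjv : j < v) (h : i*v + j < v*d) :
    (⟨i*v + j, h⟩ : Fin (v*d)) ∉ Mof v d ε := by
  intro hmem
  rcases mem_Mof.mp hmem with h0 | ⟨k, _, hk⟩
  · have h0' : i*v + j = 0 := h0
    omega
  · have hk' : i*v + j = (k.val+1)*v := hk
    rcases Nat.lt_or_ge k.val i with hlt | hge
    · have h1 : (k.val+1)*v ≤ i*v := Nat.mul_le_mul_right v (by omega)
      omega
    · have h1 : (i+1)*v ≤ (k.val+1)*v := Nat.mul_le_mul_right v (by omega)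
      have h2 : i*v + v ≤ (k.val+1)*v := by rw [Nat.succ_mul] at h1; omega
      omega

lemma Fperm_Mof_diamond {v d : ℕ} (hv : 4 ≤ v) (ε : Fin (d-1) → Bool) :
    IsDiamond v d (Fperm (Mof v d ε)) := by
  intro i _ j hj h0 hjlt hl
  constructor
  · rcases Nat.eq_zero_or_pos j with rfl | hj0
    · exact le_of_eq (congrArg _ (Fin.ext (show i*v = i*v+0 by omega)))
    · exact le_of_lt (Fperm_pmax (not_mem_Mof hj0 hj hjlt)
        ⟨i*v, h0⟩ (Fin.mk_lt_mk.mpr (by omega)))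
  · rcases Nat.eq_or_lt_of_le (Nat.le_sub_one_of_lt hj) with he | hlt
    · exact le_of_eq (congrArg _ (Fin.ext (show i*v+j = i*v+(v-1) by omega)))
    · exact le_of_lt (Fperm_pmax (not_mem_Mof (by omega) (by omega) hl)
        ⟨i*v + j, hjlt⟩ (Fin.mk_lt_mk.mpr (by omega)))

lemma Fperm_Mof_avoids {v d : ℕ} (ε : Fin (d-1) → Bool) :
    Avoids132 (Fperm (Mof v d ε)) ∧ Avoids312 (Fperm (Mof v d ε)) := by
  apply avoids_of_minmax
  intro p
  by_cases hp : p ∈ Mof v d ε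
  · exact Or.inl (Fperm_pmin hp)
  · exact Or.inr (Fperm_pmax hp)

lemma mem_of_pmin {n : ℕ} {M : Finset (Fin n)} {p : Fin n} (hp : p.val ≠ 0)
    (h : Pmin (Fperm M) p) : p ∈ M := by
  by_contra hpM
  have hn : 0 < n := p.pos
  have h0 : (⟨0, hn⟩ : Fin n) < p := Fin.mk_lt_mk.mpr (Nat.pos_of_ne_zero hp)
  exact absurd (Fperm_pmax hpM _ h0) (asymm (h _ h0))

lemma eps_iff {v d : ℕ} (hv : 0 < v) (ε : Fin (d-1) → Bool) (i : Fin (d-1)) :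
    ε i = true ↔ Pmin (Fperm (Mof v d ε)) ⟨(i.val+1)*v, iv_lt hv i⟩ := by
  constructor
  · intro hε
    exact Fperm_pmin (mem_Mof.mpr (Or.inr ⟨i, hε, rfl⟩))
  · intro hmin
    have hne : ((i.val+1)*v) ≠ 0 := by positivity
    have hpm := mem_Mof.mp (mem_of_pmin hne hmin)
    rcases hpm with h0 | ⟨j, hj, hje⟩
    · exact absurd h0 hne
    · have hji : j = i := by
        apply Fin.ext
        have := Nat.eq_of_mul_eq_mul_right hv hje.symm
        omega
      exact hji ▸ hj

lemma Fperm_Mof_injective {v d : ℕ} (hv : 0 < v) :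
    Function.Injective (fun ε : Fin (d-1) → Bool => Fperm (Mof v d ε)) := by
  intro ε1 ε2 h
  have h' : Fperm (Mof v d ε1) = Fperm (Mof v d ε2) := h
  funext i
  have h1 := eps_iff hv ε1 i
  have h2 := eps_iff hv ε2 i
  rw [h'] at h1
  have h3 := h1.trans h2.symm
  revert h3
  cases ε1 i <;> cases ε2 i <;> simp

lemma surj {v d : ℕ} (hv : 4 ≤ v) (hd : 1 ≤ d) (π : Equiv.Perm (Fin (v*d)))
    (hdia : IsDiamond v d π) (h132 : Avoids132 π) (h312 : Avoids312 π) :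
    ∃ ε : Fin (d-1) → Bool, Fperm (Mof v d ε) = π := by
  classical
  set M : Finset (Fin (v*d)) :=
    univ.filter (fun p => p.val = 0 ∨ Pmin π p) with hM
  have hmemM : ∀ p, p ∈ M ↔ (p.val = 0 ∨ Pmin π p) := by
    intro p; rw [hM, mem_filter]; exact ⟨fun h => h.2, fun h => ⟨mem_univ _, h⟩⟩
  have h0 : ∀ p ∈ M, Pmin π p := by
    intro p hp
    rcases (hmemM p).mp hp with hz | hmin
    · intro q hq
      exact absurd (Fin.lt_def.mp hq) (by omega)
    · exact hmin
  have h1 : ∀ p ∉ M, Pmax π p := by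
    intro p hp
    rcases minmax_of_avoids h132 h312 p with hmin | hmax
    · exact absurd ((hmemM p).mpr (Or.inr hmin)) hp
    · exact hmax
  have hvpos : 0 < v := by omega
  -- every nonzero element of M is a block start
  have hblock : ∀ p ∈ M, p.val ≠ 0 → ∃ i : Fin (d-1), p.val = (i.val+1)*v := by
    intro p hp hne
    have hmin := h0 p hp
    obtain ⟨i0, j, hjv, hdm⟩ : ∃ i0 j, j < v ∧ i0*v + j = p.val :=
      ⟨p.val / v, p.val % v, Nat.mod_lt _ hvpos,
        by rw [Nat.mul_comm]; exact Nat.div_add_mod _ _⟩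
    have hplt := p.isLt
    have hi0d : i0 < d := by
      by_contra hc
      push_neg at hc
      have hge : d*v ≤ i0*v := Nat.mul_le_mul_right v hc
      have hvd : d*v = v*d := Nat.mul_comm d v
      omega
    have hj0 : j = 0 := by
      by_contra hj0
      have hlt0 : i0 * v < v*d := by omega
      have hltj : i0 * v + j < v*d := by omega
      have hltl : i0 * v + (v-1) < v*d := by
        have h5 : (i0+1)*v ≤ d*v := Nat.mul_le_mul_right v (by omega)
        have h6 : i0*v + v ≤ d*v := by rw [Nat.succ_mul] at h5; omega
        have hvd : d*v = v*d := Nat.mul_comm d v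
        omega
      have hle := (hdia i0 hi0d j hjv hlt0 hltj hltl).1
      have hpe : p = ⟨i0*v + j, hltj⟩ := Fin.ext (show p.val = i0*v+j by omega)
      have hlt : (⟨i0*v, hlt0⟩ : Fin (v*d)) < p := by
        rw [hpe]; exact Fin.mk_lt_mk.mpr (by omega)
      have hcon := hmin _ hlt
      rw [hpe] at hcon
      exact absurd hle (not_le.mpr hcon)
    have hi01 : 1 ≤ i0 :=
      Nat.pos_of_ne_zero (fun h => hne (by rw [← hdm, h, hj0]; simp))
    refine ⟨⟨i0 - 1, by omega⟩, ?_⟩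
    show p.val = (i0 - 1 + 1)*v
    have he : i0 - 1 + 1 = i0 := by omega
    rw [he]
    omega
  set ε : Fin (d-1) → Bool :=
    fun i => decide ((⟨(i.val+1)*v, iv_lt hvpos i⟩ : Fin (v*d)) ∈ M) with hε
  have hMof : Mof v d ε = M := by
    ext p
    rw [mem_Mof]
    constructor
    · rintro (hz | ⟨i, hi, hie⟩)
      · exact (hmemM p).mpr (Or.inl hz)
      · have hmem : (⟨(i.val+1)*v, iv_lt hvpos i⟩ : Fin (v*d)) ∈ M := by
          rw [hε] at hi; exact of_decide_eq_true hi
        have hpe : p = ⟨(i.val+1)*v, iv_lt hvpos i⟩ := Fin.ext hie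
        rw [hpe]; exact hmem
    · intro hp
      by_cases hz : p.val = 0
      · exact Or.inl hz
      · obtain ⟨i, hie⟩ := hblock p hp hz
        refine Or.inr ⟨i, ?_, hie⟩
        rw [hε]
        apply decide_eq_true
        have hpe : (⟨(i.val+1)*v, iv_lt hvpos i⟩ : Fin (v*d)) = p := Fin.ext hie.symm
        rw [hpe]; exact hp
  refine ⟨ε, ?_⟩
  apply Equiv.ext
  intro p
  apply Fin.ext
  rw [hMof]
  exact ((perm_val_eq π M h0 h1 p).trans (Fperm_val M p).symm).symm

end AV

theorem avoids132_312_count (v d : ℕ) (hv : 4 ≤ v) (hd : 1 ≤ d) :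
    Nat.card {π : Equiv.Perm (Fin (v * d)) // IsDiamond v d π ∧ Avoids132 π ∧ Avoids312 π} =
      2 ^ (d - 1) := by
  have hbij : Function.Bijective (fun ε : Fin (d-1) → Bool =>
      (⟨AV.Fperm (AV.Mof v d ε), AV.Fperm_Mof_diamond hv ε, AV.Fperm_Mof_avoids ε⟩ :
        {π : Equiv.Perm (Fin (v * d)) // IsDiamond v d π ∧ Avoids132 π ∧ Avoids312 π})) := by
    constructor
    · intro ε1 ε2 hmk
      apply AV.Fperm_Mof_injective (show 0 < v by omega)
      exact congrArg Subtype.val hmk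
    · rintro ⟨π, hdia, h132, h312⟩
      obtain ⟨ε, hε⟩ := AV.surj hv hd π hdia h132 h312
      exact ⟨ε, Subtype.ext hε⟩
  rw [← Nat.card_congr (Equiv.ofBijective _ hbij)]
  rw [Nat.card_eq_fintype_card]
  simp
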